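/- Associativity of parallel composition: for all DL-PA∥ programs π₁, π₂, π₃ and all models M, M': M⟦π₁ ∥ (π₂ ∥ π₃)⟧M' if and only if M⟦(π₁ ∥ π₂) ∥ π₃⟧M'. -/
import Mathlib


set_option maxHeartbeats 1000000

/-- Propositional variables. -/
abbrev PVar := ℕ

/-- A DL-PA∥ model: readable variables `R`, writable variables `W`,
valuation `V`, with writability implying readability. -/
@[ext]
structure Model where
  R : Set PVar
  W : Set PVar
  V : Set PVar
  sub : W ⊆ R

mutual
/-- Formulas of DL-PA∥. -/
inductive Formula : Type where
  | atom : PVar → Formula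
  | top  : Formula
  | neg  : Formula → Formula
  | or   : Formula → Formula → Formula
  | dia  : Program → Formula → Formula
/-- Programs of DL-PA∥. -/
inductive Program : Type where
  | assignT : PVar → Program   -- +p
  | assignF : PVar → Program   -- −p
  | addR : PVar → Program      -- +r p
  | remR : PVar → Program      -- −r p
  | addW : PVar → Program      -- +w p
  | remW : PVar → Program      -- −w p
  | testEx : Formula → Program -- exogenous test φ?
  | testEn : Formula → Program -- endogenous test φ?ⁿ
  | seq : Program → Program → Program
  | choice : Program → Program → Program
  | star : Program → Program
  | par : Program → Program → Program
end

/-- RW-disjointness. -/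
def RWdisjoint (M1 M2 : Model) : Prop :=
  M1.W ∩ M2.R = ∅ ∧ M2.W ∩ M1.R = ∅

/-- Split relation `M ◁ (M₁,M₂)`. -/
def SplitRel (M M1 M2 : Model) : Prop :=
  RWdisjoint M1 M2 ∧ M.R = M1.R ∪ M2.R ∧ M.W = M1.W ∪ M2.W ∧ M.V = M1.V ∧ M.V = M2.V

/-- Merge relation `M ▷ (M₁,M₂)`. -/
def MergeRel (M M1 M2 : Model) : Prop :=
  RWdisjoint M1 M2 ∧ M.R = M1.R ∪ M2.R ∧ M.W = M1.W ∪ M2.W ∧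
  M1.V \ M.W = M2.V \ M.W ∧ M.V = (M1.V ∩ M1.W) ∪ (M2.V ∩ M2.W) ∪ (M1.V ∩ M2.V)

/-- Indistinguishability `M ∼ M'`. -/
def Indist (M M' : Model) : Prop :=
  M.R = M'.R ∧ M.W = M'.W ∧ M.V ∩ M.R = M'.V ∩ M'.R

mutual
/-- Truth of a formula in a model. -/
def Sat : Model → Formula → Prop
  | M, .atom p => p ∈ M.V
  | _, .top => True
  | M, .neg φ => ¬ Sat M φ
  | M, .or φ ψ => Sat M φ ∨ Sat M ψ
  | M, .dia π φ => ∃ M', Interp π M M' ∧ Sat M' φ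
/-- Interpretation of programs as relations between models. -/
def Interp : Program → Model → Model → Prop
  | .assignT p, M, M' => M'.R = M.R ∧ M'.W = M.W ∧ M'.V = M.V ∪ {p} ∧ p ∈ M.W
  | .assignF p, M, M' => M'.R = M.R ∧ M'.W = M.W ∧ M'.V = M.V \ {p} ∧ p ∈ M.W
  | .addR p, M, M' => M'.R = M.R ∪ {p} ∧ M'.W = M.W ∧ M'.V = M.V
  | .remR p, M, M' => M'.R = M.R \ {p} ∧ M'.W = M.W \ {p} ∧ M'.V = M.V
  | .addW p, M, M' => M'.R = M.R ∪ {p} ∧ M'.W = M.W ∪ {p} ∧ M'.V = M.V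
  | .remW p, M, M' => M'.R = M.R ∧ M'.W = M.W \ {p} ∧ M'.V = M.V
  | .testEx φ, M, M' => M = M' ∧ Sat M φ
  | .testEn φ, M, M' => M = M' ∧ ∀ M'', Indist M'' M → Sat M'' φ
  | .seq π1 π2, M, M' => ∃ M'', Interp π1 M M'' ∧ Interp π2 M'' M'
  | .choice π1 π2, M, M' => Interp π1 M M' ∨ Interp π2 M M'
  | .star π, M, M' => Relation.ReflTransGen (fun A B => Interp π A B) M M'
  | .par π1 π2, M, M' => ∃ M1 M2 M1' M2',
      SplitRel M M1 M2 ∧ MergeRel M' M1' M2' ∧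
      Interp π1 M1 M1' ∧ Interp π2 M2 M2' ∧
      M1.R = M1'.R ∧ M1.W = M1'.W ∧ M1.V \ M1.W = M1'.V \ M1'.W ∧
      M2.R = M2'.R ∧ M2.W = M2'.W ∧ M2.V \ M2.W = M2'.V \ M2'.W
end

mutual
/-- Propositional variables occurring in a formula. -/
def varsF : Formula → Finset PVar
  | .atom p => {p}
  | .top => ∅
  | .neg φ => varsF φ
  | .or φ ψ => varsF φ ∪ varsF ψ
  | .dia π φ => varsP π ∪ varsF φ
/-- Propositional variables occurring in a program. -/
def varsP : Program → Finset PVar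
  | .assignT p => {p}
  | .assignF p => {p}
  | .addR p => {p}
  | .remR p => {p}
  | .addW p => {p}
  | .remW p => {p}
  | .testEx φ => varsF φ
  | .testEn φ => varsF φ
  | .seq π1 π2 => varsP π1 ∪ varsP π2
  | .choice π1 π2 => varsP π1 ∪ varsP π2
  | .star π => varsP π
  | .par π1 π2 => varsP π1 ∪ varsP π2
end

/-- `⊥`. -/
def botF : Formula := .neg .top
/-- Conjunction. -/
def andF (φ ψ : Formula) : Formula := .neg (.or (.neg φ) (.neg ψ))
/-- Implication. -/
def impF (φ ψ : Formula) : Formula := .or (.neg φ) ψ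
/-- Bi-implication. -/
def iffF (φ ψ : Formula) : Formula := andF (impF φ ψ) (impF ψ φ)
/-- `[π]φ`. -/
def boxF (π : Program) (φ : Formula) : Formula := .neg (.dia π (.neg φ))
/-- `w(p)`: `p` is writable. -/
def wF (p : PVar) : Formula := .dia (.assignT p) .top
/-- `r(p)`: `p` is readable. -/
def rF (p : PVar) : Formula :=
  .or (.dia (.testEn (.atom p)) .top) (.dia (.testEn (.neg (.atom p))) .top)

/-- Restriction `M ∩ P` of a model to a set of variables. -/
def interModel (M : Model) (P : Set PVar) : Model :=
  ⟨M.R ∩ P, M.W ∩ P, M.V ∩ P, Set.inter_subset_inter M.sub (subset_refl P)⟩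

/-- A formula is valid iff true in every model. -/
def Valid (φ : Formula) : Prop := ∀ M : Model, Sat M φ


lemma par_comm {π1 π2 : Program} {M M' : Model}
    (h : Interp (.par π1 π2) M M') : Interp (.par π2 π1) M M' := by
  simp only [Interp] at h ⊢
  obtain ⟨M1, M2, M1', M2', ⟨⟨d1, d2⟩, eR, eW, eVa, eVb⟩,
    ⟨⟨d1', d2'⟩, eR', eW', eD', eV'⟩, h1, h2, f1, f2, f3, f4, f5, f6⟩ := h
  refine ⟨M2, M1, M2', M1', ⟨⟨d2, d1⟩, by rw [eR, Set.union_comm],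
    by rw [eW, Set.union_comm], eVb, eVa⟩,
    ⟨⟨d2', d1'⟩, by rw [eR', Set.union_comm], by rw [eW', Set.union_comm],
      eD'.symm, ?_, ⟩, h2, h1, f4, f5, f6, f1, f2, f3⟩
  rw [eV']; ext x
  simp only [Set.mem_union, Set.mem_inter_iff]
  tauto

set_option maxHeartbeats 4000000 in
lemma par_dir {π1 π2 π3 : Program} {M M' : Model}
    (h : Interp (.par π1 (.par π2 π3)) M M') :
    Interp (.par (.par π1 π2) π3) M M' := by
  simp only [Interp] at h ⊢
  obtain ⟨M1, M23, M1', M23', ⟨⟨d1, d2⟩, eR, eW, eVa, eVb⟩,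
    ⟨⟨d1', d2'⟩, eR', eW', eD', eV'⟩, h1, h23, fR1, fW1, fV1, fR23, fW23, fV23⟩ := h
  obtain ⟨M2, M3, M2', M3', ⟨⟨c1, c2⟩, gR, gW, gVa, gVb⟩,
    ⟨⟨c1', c2'⟩, gR', gW', gD', gV'⟩, h2, h3, fR2, fW2, fV2, fR3, fW3, fV3⟩ := h23
  -- pointwise versions of all hypotheses
  simp only [Set.eq_empty_iff_forall_notMem, Set.mem_inter_iff, not_and] at d1 d2 d1' d2' c1 c2 c1' c2'
  have pgR : ∀ x, x ∈ M23.R ↔ x ∈ M2.R ∨ x ∈ M3.R := by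
    intro x; rw [gR]; simp [Set.mem_union]
  have pgW : ∀ x, x ∈ M23.W ↔ x ∈ M2.W ∨ x ∈ M3.W := by
    intro x; rw [gW]; simp [Set.mem_union]
  have pgR' : ∀ x, x ∈ M23'.R ↔ x ∈ M2'.R ∨ x ∈ M3'.R := by
    intro x; rw [gR']; simp [Set.mem_union]
  have pgW' : ∀ x, x ∈ M23'.W ↔ x ∈ M2'.W ∨ x ∈ M3'.W := by
    intro x; rw [gW']; simp [Set.mem_union]
  have peW : ∀ x, x ∈ M.W ↔ x ∈ M1.W ∨ x ∈ M23.W := by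
    intro x; rw [eW]; simp [Set.mem_union]
  have peW' : ∀ x, x ∈ M'.W ↔ x ∈ M1'.W ∨ x ∈ M23'.W := by
    intro x; rw [eW']; simp [Set.mem_union]
  have peVa := Set.ext_iff.mp eVa
  have peVb := Set.ext_iff.mp eVb
  have pgVa := Set.ext_iff.mp gVa
  have pgVb := Set.ext_iff.mp gVb
  have pfW1 := Set.ext_iff.mp fW1
  have pfW2 := Set.ext_iff.mp fW2
  have pfW3 := Set.ext_iff.mp fW3
  have pfV1 : ∀ x, x ∈ M1.V ∧ x ∉ M1.W ↔ x ∈ M1'.V ∧ x ∉ M1'.W := by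
    intro x; have := Set.ext_iff.mp fV1 x; simpa [Set.mem_diff] using this
  have pfV2 : ∀ x, x ∈ M2.V ∧ x ∉ M2.W ↔ x ∈ M2'.V ∧ x ∉ M2'.W := by
    intro x; have := Set.ext_iff.mp fV2 x; simpa [Set.mem_diff] using this
  have pfV3 : ∀ x, x ∈ M3.V ∧ x ∉ M3.W ↔ x ∈ M3'.V ∧ x ∉ M3'.W := by
    intro x; have := Set.ext_iff.mp fV3 x; simpa [Set.mem_diff] using this
  have pgV' : ∀ x, x ∈ M23'.V ↔ (x ∈ M2'.V ∧ x ∈ M2'.W) ∨ (x ∈ M3'.V ∧ x ∈ M3'.W)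
      ∨ (x ∈ M2'.V ∧ x ∈ M3'.V) := by
    intro x; rw [gV']; simp [Set.mem_union, Set.mem_inter_iff, or_assoc]
  have peV' : ∀ x, x ∈ M'.V ↔ (x ∈ M1'.V ∧ x ∈ M1'.W) ∨ (x ∈ M23'.V ∧ x ∈ M23'.W)
      ∨ (x ∈ M1'.V ∧ x ∈ M23'.V) := by
    intro x; rw [eV']; simp [Set.mem_union, Set.mem_inter_iff, or_assoc]
  have ps1' : ∀ x, x ∈ M1'.W → x ∈ M1'.R := fun x hx => M1'.sub hx
  have ps2' : ∀ x, x ∈ M2'.W → x ∈ M2'.R := fun x hx => M2'.sub hx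
  have ps3' : ∀ x, x ∈ M3'.W → x ∈ M3'.R := fun x hx => M3'.sub hx
  have ps1 : ∀ x, x ∈ M1.W → x ∈ M1.R := fun x hx => M1.sub hx
  have ps2 : ∀ x, x ∈ M2.W → x ∈ M2.R := fun x hx => M2.sub hx
  have ps3 : ∀ x, x ∈ M3.W → x ∈ M3.R := fun x hx => M3.sub hx
  have w12' : ∀ x, x ∈ M1'.W → x ∉ M2'.W := fun x h1 h2 =>
    d1' x h1 ((pgR' x).mpr (Or.inl (ps2' x h2)))
  have w13' : ∀ x, x ∈ M1'.W → x ∉ M3'.W := fun x h1 h2 =>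
    d1' x h1 ((pgR' x).mpr (Or.inr (ps3' x h2)))
  have w23' : ∀ x, x ∈ M2'.W → x ∉ M3'.W := fun x h1 h2 =>
    c1' x h1 (ps3' x h2)
  have hA1 : ∀ x, x ∉ M1'.W → (x ∈ M1'.V ↔ x ∈ M.V) := by
    intro x hx
    have := pfV1 x; have := pfW1 x; have := peVa x; tauto
  have hB1 : ∀ x, x ∉ M2'.W → (x ∈ M2'.V ↔ x ∈ M.V) := by
    intro x hx
    have := pfV2 x; have := pfW2 x; have := peVb x; have := pgVa x; tauto
  have hC1 : ∀ x, x ∉ M3'.W → (x ∈ M3'.V ↔ x ∈ M.V) := by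
    intro x hx
    have := pfV3 x; have := pfW3 x; have := peVb x; have := pgVb x; tauto
  refine ⟨⟨M1.R ∪ M2.R, M1.W ∪ M2.W, M.V, Set.union_subset_union M1.sub M2.sub⟩,
    M3,
    ⟨M1'.R ∪ M2'.R, M1'.W ∪ M2'.W,
      (M1'.V ∩ M1'.W) ∪ (M2'.V ∩ M2'.W) ∪ (M1'.V ∩ M2'.V),
      Set.union_subset_union M1'.sub M2'.sub⟩,
    M3', ⟨⟨?_, ?_⟩, ?_, ?_, rfl, ?_⟩, ⟨⟨?_, ?_⟩, ?_, ?_, ?_, ?_⟩,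
    ?_, h3, ?_, ?_, ?_, fR3, fW3, fV3⟩
  -- A1 : (M1.W ∪ M2.W) ∩ M3.R = ∅
  · ext x
    simp only [Set.mem_inter_iff, Set.mem_union, Set.mem_empty_iff_false, iff_false, not_and, not_or]
    have := d1 x; have := c1 x; have := pgR x; tauto
  -- A2 : M3.W ∩ (M1.R ∪ M2.R) = ∅
  · ext x
    simp only [Set.mem_inter_iff, Set.mem_union, Set.mem_empty_iff_false, iff_false, not_and, not_or]
    have := d2 x; have := c2 x; have := pgW x; tauto
  -- A3 : M.R = (M1.R ∪ M2.R) ∪ M3.R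
  · rw [eR, gR, Set.union_assoc]
  -- A4 : M.W = ...
  · rw [eW, gW, Set.union_assoc]
  -- A6 : M.V = M3.V
  · exact eVb.trans gVb
  -- B1 : (M1'.W ∪ M2'.W) ∩ M3'.R = ∅
  · ext x
    simp only [Set.mem_inter_iff, Set.mem_union, Set.mem_empty_iff_false, iff_false, not_and, not_or]
    have := d1' x; have := c1' x; have := pgR' x; tauto
  -- B2 : M3'.W ∩ (M1'.R ∪ M2'.R) = ∅
  · ext x
    simp only [Set.mem_inter_iff, Set.mem_union, Set.mem_empty_iff_false, iff_false, not_and, not_or]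
    have := d2' x; have := c2' x; have := pgW' x; tauto
  -- B3 : M'.R = (M1'.R ∪ M2'.R) ∪ M3'.R
  · rw [eR', gR', Set.union_assoc]
  -- B4 : M'.W = ...
  · rw [eW', gW', Set.union_assoc]
  -- B5 : V12' \ M'.W = M3'.V \ M'.W
  · ext x
    simp only [Set.mem_diff, Set.mem_union, Set.mem_inter_iff]
    by_cases hw : x ∈ M'.W
    · simp [hw]
    · have hw1 : x ∉ M1'.W := fun h => hw ((peW' x).mpr (Or.inl h))
      have hw23 : x ∉ M23'.W := fun h => hw ((peW' x).mpr (Or.inr h))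
      have hw2 : x ∉ M2'.W := fun h => hw23 ((pgW' x).mpr (Or.inl h))
      have hw3 : x ∉ M3'.W := fun h => hw23 ((pgW' x).mpr (Or.inr h))
      simp only [hA1 x hw1, hB1 x hw2, hC1 x hw3]
      simp [hw, hw1, hw2, hw3]
  -- B6 : M'.V = (V12' ∩ (W1' ∪ W2')) ∪ (V3' ∩ W3') ∪ (V12' ∩ V3')
  · ext x
    simp only [Set.mem_union, Set.mem_inter_iff]
    rw [peV' x, pgV' x, pgW' x]
    by_cases h1 : x ∈ M1'.W
    · have n2 := w12' x h1; have n3 := w13' x h1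
      simp only [h1, n2, n3]; simp; tauto
    · by_cases h2 : x ∈ M2'.W
      · have n3 := w23' x h2
        simp only [h1, h2, n3]; simp; tauto
      · by_cases h3 : x ∈ M3'.W
        · simp only [h1, h2, h3]; simp; tauto
        · simp only [h1, h2, h3]; simp; tauto
  -- C : Interp (par π1 π2) M12 M12'
  · refine ⟨M1, M2, M1', M2', ⟨⟨?_, ?_⟩, rfl, rfl, eVa, eVb.trans gVa⟩,
      ⟨⟨?_, ?_⟩, rfl, rfl, ?_, rfl⟩, h1, h2, fR1, fW1, fV1, fR2, fW2, fV2⟩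
    · ext x
      simp only [Set.mem_inter_iff, Set.mem_empty_iff_false, iff_false, not_and]
      have := d1 x; have := pgR x; tauto
    · ext x
      simp only [Set.mem_inter_iff, Set.mem_empty_iff_false, iff_false, not_and]
      have := d2 x; have := pgW x; tauto
    · ext x
      simp only [Set.mem_inter_iff, Set.mem_empty_iff_false, iff_false, not_and]
      have := d1' x; have := pgR' x; tauto
    · ext x
      simp only [Set.mem_inter_iff, Set.mem_empty_iff_false, iff_false, not_and]
      have := d2' x; have := pgW' x; tauto
    · ext x
      simp only [Set.mem_diff, Set.mem_union, not_or]
      by_cases h1 : x ∈ M1'.W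
      · simp [h1]
      · by_cases h2 : x ∈ M2'.W
        · simp [h2]
        · simp only [hA1 x h1, hB1 x h2]
  -- D frames for M12
  · show M1.R ∪ M2.R = M1'.R ∪ M2'.R
    rw [fR1, fR2]
  · show M1.W ∪ M2.W = M1'.W ∪ M2'.W
    rw [fW1, fW2]
  · show M.V \ (M1.W ∪ M2.W) = _ \ (M1'.W ∪ M2'.W)
    ext x
    simp only [Set.mem_diff, Set.mem_union, Set.mem_inter_iff, not_or]
    by_cases h1 : x ∈ M1'.W
    · have h1u : x ∈ M1.W := (pfW1 x).mpr h1
      simp [h1, h1u]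
    · by_cases h2 : x ∈ M2'.W
      · have h2u : x ∈ M2.W := (pfW2 x).mpr h2
        simp [h2, h2u]
      · have h1u : x ∉ M1.W := fun h => h1 ((pfW1 x).mp h)
        have h2u : x ∉ M2.W := fun h => h2 ((pfW2 x).mp h)
        simp only [hA1 x h1, hB1 x h2]
        simp [h1, h2, h1u, h2u]


/-- Associativity of parallel composition. -/
theorem par_assoc (π1 π2 π3 : Program) (M M' : Model) :
    Interp (.par π1 (.par π2 π3)) M M' ↔ Interp (.par (.par π1 π2) π3) M M' := by
  constructor
  · exact par_dir
  · intro h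
    exact par_comm (par_dir (par_comm (par_dir (par_comm h))))
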